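/- Let w be an ultimately periodic ω-word with two decompositions (u, v) and (x, y), i.e., w = u v^ω = x y^ω with v, y nonempty. Let r be the smallest period of (u, v) and t the smallest period of (x, y). Then |r| = |t|, and either r = t or there exists j with 2 ≤ j ≤ |t| such that r = t[j..|t|] · t[1..j−1] (r is a cyclic rotation of t). -/

import Mathlib

/-- Prepend a finite word to an infinite word. -/
def prependW {α : Type} (u : List α) (w : ℕ → α) : ℕ → α :=
  fun i => if h : i < u.length then u.get ⟨i, h⟩ else w (i - u.length)

/-- The periodic infinite word `v^ω` (arbitrary when `v = []`). -/
def periodW {α : Type} [Inhabited α] (v : List α) : ℕ → α :=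
  fun i => v.getD (i % v.length) default

/-- The ultimately periodic word `u · v^ω`. -/
def upw {α : Type} [Inhabited α] (u v : List α) : ℕ → α :=
  prependW u (periodW v)

/-- The ultimately periodic words of an ω-language. -/
def UP {α : Type} [Inhabited α] (L : Set (ℕ → α)) : Set (ℕ → α) :=
  { w | ∃ u v : List α, v ≠ [] ∧ w = upw u v ∧ w ∈ L }

/-- `v^k` : `k`-fold repetition of the finite word `v`. -/
def rep {α : Type} (v : List α) (k : ℕ) : List α :=
  (List.replicate k v).flatten
/-- `r` is the smallest period of a decomposition with period word `v`. -/
def IsSmallestPeriod {α : Type} [Inhabited α] (r v : List α) : Prop :=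
  r ≠ [] ∧ r <+: v ∧ periodW r = periodW v ∧
    ∀ t : List α, t ≠ [] → t <+: r → t ≠ r → periodW t ≠ periodW r

/-- Smallest periods of two decompositions of the same ω-word have the same
length and are cyclic rotations of each other. -/
def HasPeriodS {α : Type} (s : ℕ → α) (p : ℕ) : Prop := ∀ n, s (n + p) = s n

lemma hasPeriodS_mul {α : Type} {s : ℕ → α} {p : ℕ} (h : HasPeriodS s p) (k n : ℕ) :
    s (n + k * p) = s n := by
  induction k with
  | zero => simp
  | succ k ih =>
    have e : n + (k + 1) * p = (n + k * p) + p := by ring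
    rw [e, h, ih]

lemma hasPeriodS_mod {α : Type} {s : ℕ → α} {P : ℕ} (h : HasPeriodS s P) (n : ℕ) :
    s n = s (n % P) := by
  conv_lhs => rw [← Nat.mod_add_div n P]
  rw [show n % P + P * (n / P) = n % P + (n / P) * P by ring]
  exact hasPeriodS_mul h _ _

lemma hasPeriodS_gcd {α : Type} {s : ℕ → α} : ∀ p q : ℕ, HasPeriodS s p → HasPeriodS s q → HasPeriodS s (Nat.gcd p q) := by
  intro p q
  induction p, q using Nat.gcd.induction with
  | H0 n => intro _ h; simpa using h
  | H1 m n hm ih =>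
    intro hp hq
    rw [Nat.gcd_rec]
    apply ih ?_ hp
    intro k
    have e : k + n % m + (n / m) * m = k + n := by
      have := Nat.mod_add_div n m
      nlinarith [Nat.mod_add_div n m]
    calc s (k + n % m) = s (k + n % m + (n/m)*m) := (hasPeriodS_mul hp _ _).symm
      _ = s (k + n) := by rw [e]
      _ = s k := hq k

lemma periodW_period {α : Type} [Inhabited α] (v : List α) : HasPeriodS (periodW v) v.length := by
  intro n; simp [periodW, Nat.add_mod_right]

lemma smallest_dvd {α : Type} [Inhabited α] {r : List α} (hr0 : r ≠ [])
    (hmin : ∀ t : List α, t ≠ [] → t <+: r → t ≠ r → periodW t ≠ periodW r)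
    {p : ℕ} (hp : HasPeriodS (periodW r) p) : r.length ∣ p := by
  have hP : 0 < r.length := List.length_pos_iff.mpr hr0
  set P := r.length with hPdef
  set d := Nat.gcd p P with hd
  have hdP : d ∣ P := Nat.gcd_dvd_right _ _
  have hd0 : 0 < d := Nat.gcd_pos_of_pos_right _ hP
  have hdle : d ≤ P := Nat.le_of_dvd hP hdP
  have hper : HasPeriodS (periodW r) d := hasPeriodS_gcd p P hp (periodW_period r)
  set q := r.take d with hq
  have hql : q.length = d := by simp only [hq, List.length_take]; omega
  have hpw : periodW q = periodW r := by
    funext n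
    have hnd : n % d < d := Nat.mod_lt _ hd0
    have h1 : periodW r n = periodW r (n % d) := hasPeriodS_mod hper n
    have h2 : periodW r (n % d) = r.getD (n % d) default := by
      simp only [periodW, ← hPdef]
      congr 1
      exact Nat.mod_eq_of_lt (lt_of_lt_of_le hnd hdle)
    have h3 : q.getD (n % d) default = r.getD (n % d) default := by
      rw [List.getD_eq_getElem q default (by omega : n % d < q.length),
        List.getD_eq_getElem r default (by omega : n % d < r.length)]
      simp [hq, List.getElem_take]
    have h4 : periodW q n = q.getD (n % d) default := by
      simp only [periodW, hql]
    rw [h4, h3, ← h2, ← h1]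
  have hqr : q = r := by
    by_contra hne
    have hqne : q ≠ [] := by
      intro h; rw [h] at hql; simp at hql; omega
    exact hmin q hqne (List.take_prefix _ _) hne hpw
  have : d = P := by rw [← hql, hqr]
  rw [← this]
  exact Nat.gcd_dvd_left _ _

lemma period_of_shift {α : Type} {s : ℕ → α} {P c p : ℕ} (hP : 0 < P)
    (hsP : HasPeriodS s P) (h : ∀ n, s (n + c + p) = s (n + c)) : HasPeriodS s p := by
  intro m
  have hcP : c ≤ c * P := Nat.le_mul_of_pos_right c hP
  have h1 : s (m + p) = s ((m + p) + c * P) := (hasPeriodS_mul hsP c _).symm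
  have e1 : (m + p) + c * P = (m + (c * P - c)) + c + p := by omega
  have h2 := h (m + (c * P - c))
  have e2 : (m + (c * P - c)) + c = m + c * P := by omega
  rw [h1, e1, h2, e2]
  exact hasPeriodS_mul hsP c m

lemma upw_add {α : Type} [Inhabited α] (u v : List α) (n : ℕ) :
    upw u v (u.length + n) = periodW v n := by
  unfold upw prependW
  rw [dif_neg (by omega)]
  congr 1
  omega

theorem stmt_6 {α : Type} [Inhabited α] (u v x y r t : List α)
    (hv : v ≠ []) (hy : y ≠ [])
    (hw : upw u v = upw x y)
    (hr : IsSmallestPeriod r v) (ht : IsSmallestPeriod t y) :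
    r.length = t.length ∧
      (r = t ∨ ∃ j : ℕ, 2 ≤ j ∧ j ≤ t.length ∧
        r = t.drop (j - 1) ++ t.take (j - 1)) := by
  obtain ⟨hr0, hrpre, hrpw, hrmin⟩ := hr
  obtain ⟨ht0, htpre, htpw, htmin⟩ := ht
  have hP : 0 < r.length := List.length_pos_iff.mpr hr0
  have hQ : 0 < t.length := List.length_pos_iff.mpr ht0
  have star : ∀ n, periodW r (n + x.length) = periodW t (n + u.length) := by
    intro n
    have h1 := upw_add u v (n + x.length)
    have h2 := upw_add x y (n + u.length)
    rw [hrpw, htpw, ← h1, ← h2, hw]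
    congr 1
    ring
  have hrt : HasPeriodS (periodW r) t.length := by
    apply period_of_shift hP (periodW_period r) (c := x.length)
    intro n
    have s1 := star (n + t.length)
    have pt := periodW_period t (n + u.length)
    rw [show n + x.length + t.length = (n + t.length) + x.length by ring, s1,
        show n + t.length + u.length = (n + u.length) + t.length by ring, pt, ← star n]
  have htr : HasPeriodS (periodW t) r.length := by
    apply period_of_shift hQ (periodW_period t) (c := u.length)
    intro n
    have s1 := (star (n + r.length)).symm
    have pr := periodW_period r (n + x.length)
    rw [show n + u.length + r.length = (n + r.length) + u.length by ring, s1,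
        show n + r.length + x.length = (n + x.length) + r.length by ring, pr, star n]
  have hdvd1 : r.length ∣ t.length := smallest_dvd hr0 hrmin hrt
  have hdvd2 : t.length ∣ r.length := smallest_dvd ht0 htmin htr
  have hPQ : r.length = t.length := Nat.dvd_antisymm hdvd1 hdvd2
  refine ⟨hPQ, ?_⟩
  set P := r.length with hPdef
  set a := x.length with ha
  set b := u.length with hb
  have hma : a % P < P := Nat.mod_lt _ hP
  set k := (b + (P - a % P)) % P with hk
  have hkP : k < P := Nat.mod_lt _ hP
  have key : ∀ i, i < P → r.getD i default = t.getD ((i + k) % P) default := by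
    intro i hi
    have hn := star (i + (P - a % P))
    have hdm := Nat.div_add_mod a P
    set A := P * (a / P) with hA
    have e2 : ((i + (P - a % P)) + a) % P = i := by
      rw [show (i + (P - a % P)) + a = i + P * (a / P + 1) by
        rw [Nat.mul_succ, ← hA]; omega]
      rw [Nat.add_mul_mod_self_left]
      exact Nat.mod_eq_of_lt hi
    have e3 : ((i + (P - a % P)) + b) % P = (i + k) % P := by
      rw [hk, Nat.add_mod_mod]
      congr 1
      ring
    simp only [periodW, ← hPdef, ← hPQ] at hn
    rw [e2, e3] at hn
    exact hn
  have hrot : r = t.drop k ++ t.take k := by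
    apply List.ext_getElem
    · simp only [List.length_append, List.length_drop, List.length_take]
      omega
    · intro i h1 h2
      have hi : i < P := h1
      have hkey := key i hi
      have hmod : (i + k) % P < t.length := by
        rw [hPQ] at *
        exact Nat.mod_lt _ hQ
      rw [List.getD_eq_getElem r default h1, List.getD_eq_getElem t default hmod] at hkey
      rw [hkey]
      by_cases hcase : i < P - k
      · rw [List.getElem_append_left (by simp only [List.length_drop]; omega)]
        rw [List.getElem_drop]
        congr 1
        rw [Nat.mod_eq_of_lt (by omega)]
        omega
      · rw [List.getElem_append_right (by simp only [List.length_drop]; omega)]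
        rw [List.getElem_take]
        congr 1
        have : (i + k) % P = i + k - P := by
          rw [Nat.mod_eq_sub_mod (by omega), Nat.mod_eq_of_lt (by omega)]
        rw [this]
        simp only [List.length_drop]
        omega
  by_cases hk0 : k = 0
  · left
    rw [hrot, hk0]
    simp
  · right
    refine ⟨k + 1, by omega, by omega, ?_⟩
    simpa using hrot
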